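/- Let V be a multiplicative partial isometry on H⊗H. Under the pairing ⟨λ(ω), ρ(ω')⟩ := (ω⊗ω')(V), the map Δ(X) = V(X⊗1)V* restricted to the right leg A is the transpose of the multiplication on the left leg Â: ⟨λ(ω), ρ(ω')ρ(ω'')⟩ = ⟨Δ(λ(ω)), ρ(ω')⊗ρ(ω'')⟩ for all ω, ω', ω'' ∈ L(H)*. In particular Δ is coassociative on A. -/

import Mathlib

open Matrix

namespace MPIpaper

variable {n : Type*} [Fintype n] [DecidableEq n]

noncomputable section

/-- `W₁₂ = W ⊗ 1` on `H ⊗ H ⊗ H`. -/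
def leg12 (V : Matrix (n × n) (n × n) ℂ) : Matrix (n × n × n) (n × n × n) ℂ :=
  Matrix.of fun p q => V (p.1, p.2.1) (q.1, q.2.1) * (if p.2.2 = q.2.2 then (1 : ℂ) else 0)

/-- `W₂₃ = 1 ⊗ W` on `H ⊗ H ⊗ H`. -/
def leg23 (V : Matrix (n × n) (n × n) ℂ) : Matrix (n × n × n) (n × n × n) ℂ :=
  Matrix.of fun p q => (if p.1 = q.1 then (1 : ℂ) else 0) * V p.2 q.2

/-- `W₁₃ = (1⊗Σ)(W⊗1)(1⊗Σ)` on `H ⊗ H ⊗ H`. -/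
def leg13 (V : Matrix (n × n) (n × n) ℂ) : Matrix (n × n × n) (n × n × n) ℂ :=
  Matrix.of fun p q => V (p.1, p.2.2) (q.1, q.2.2) * (if p.2.1 = q.2.1 then (1 : ℂ) else 0)

/-- A multiplicative partial isometry: `VV*V = V`, the pentagon equation, and the
three auxiliary (hexagon-type) equations. -/
def IsMPI (V : Matrix (n × n) (n × n) ℂ) : Prop :=
  V * Vᴴ * V = V ∧
  leg23 V * leg12 V = leg12 V * leg13 V * leg23 V ∧
  leg13 V * leg23 V * (leg23 V)ᴴ = (leg12 V)ᴴ * leg12 V * leg13 V ∧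
  leg12 V * (leg12 V)ᴴ * leg23 V = leg23 V * leg12 V * (leg12 V)ᴴ ∧
  leg12 V * (leg23 V)ᴴ * leg23 V = (leg23 V)ᴴ * leg23 V * leg12 V

/-- `λ(ω) = (ω ⊗ id)(V)`. -/
def lam (ω : Matrix n n ℂ →ₗ[ℂ] ℂ) (V : Matrix (n × n) (n × n) ℂ) : Matrix n n ℂ :=
  Matrix.of fun i j => ω (Matrix.of fun a b => V (a, i) (b, j))

/-- `ρ(ω) = (id ⊗ ω)(V)`. -/
def rho (ω : Matrix n n ℂ →ₗ[ℂ] ℂ) (V : Matrix (n × n) (n × n) ℂ) : Matrix n n ℂ :=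
  Matrix.of fun i j => ω (Matrix.of fun a b => V (i, a) (j, b))

/-- `1 ⊗ X` on `H ⊗ H`. -/
def oneTensor (X : Matrix n n ℂ) : Matrix (n × n) (n × n) ℂ :=
  Matrix.of fun p q => (if p.1 = q.1 then (1 : ℂ) else 0) * X p.2 q.2

/-- `X ⊗ 1` on `H ⊗ H`. -/
def tensorOne (X : Matrix n n ℂ) : Matrix (n × n) (n × n) ℂ :=
  Matrix.of fun p q => X p.1 q.1 * (if p.2 = q.2 then (1 : ℂ) else 0)

/-- `Δ(X) = V (X ⊗ 1) V*`. -/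
def Delta (V : Matrix (n × n) (n × n) ℂ) (X : Matrix n n ℂ) : Matrix (n × n) (n × n) ℂ :=
  V * tensorOne X * Vᴴ

/-- `Δ̂(X) = V* (1 ⊗ X) V`. -/
def hatDelta (V : Matrix (n × n) (n × n) ℂ) (X : Matrix n n ℂ) : Matrix (n × n) (n × n) ℂ :=
  Vᴴ * oneTensor X * V

/-- `(ω ⊗ ω')(W)` for an operator `W` on `H ⊗ H`. -/
def applyBoth (ω ω' : Matrix n n ℂ →ₗ[ℂ] ℂ) (W : Matrix (n × n) (n × n) ℂ) : ℂ :=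
  ω (Matrix.of fun i j => ω' (Matrix.of fun k l => W (i, k) (j, l)))

end

set_option linter.unusedSectionVars false

/-! ### Auxiliary lemmas about linear functionals on matrices -/

lemma omega_sum (ω : Matrix n n ℂ →ₗ[ℂ] ℂ) {ι : Type*} (s : Finset ι) (f : ι → n → n → ℂ) :
    ω (Matrix.of fun x y => ∑ k ∈ s, f k x y) = ∑ k ∈ s, ω (Matrix.of (f k)) := by
  rw [show (Matrix.of fun x y => ∑ k ∈ s, f k x y) = ∑ k ∈ s, Matrix.of (f k) from by
    ext x y; simp [Matrix.sum_apply]]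
  exact map_sum ω _ s

lemma omega_const_mul (ω : Matrix n n ℂ →ₗ[ℂ] ℂ) (c : ℂ) (f : n → n → ℂ) :
    ω (Matrix.of fun x y => c * f x y) = c * ω (Matrix.of f) := by
  have h : (Matrix.of fun x y => c * f x y) = c • Matrix.of f := by ext x y; simp
  rw [h, _root_.map_smul, smul_eq_mul]

lemma omega_eval (ω : Matrix n n ℂ →ₗ[ℂ] ℂ) (X : Matrix n n ℂ) :
    ω X = ∑ i, ∑ j, X i j * ω (Matrix.single i j 1) := by
  conv_lhs => rw [matrix_eq_sum_single X]
  rw [map_sum]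
  refine Finset.sum_congr rfl fun i _ => ?_
  rw [map_sum]
  refine Finset.sum_congr rfl fun j _ => ?_
  rw [show Matrix.single i j (X i j) = X i j • Matrix.single i j 1 from by
    rw [smul_single]; simp]
  rw [_root_.map_smul, smul_eq_mul]

/-- "Fubini" for linear functionals on matrices. -/
lemma omega_swap (ω₁ ω₂ : Matrix n n ℂ →ₗ[ℂ] ℂ) (f : n → n → n → n → ℂ) :
    ω₁ (Matrix.of fun i j => ω₂ (Matrix.of fun a b => f i j a b)) =
    ω₂ (Matrix.of fun a b => ω₁ (Matrix.of fun i j => f i j a b)) := by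
  have h : (Matrix.of fun i j => ω₂ (Matrix.of fun a b => f i j a b)) =
      Matrix.of fun i j => ∑ a, ∑ b, f i j a b * ω₂ (Matrix.single a b 1) := by
    ext i j; simp only [Matrix.of_apply]; rw [omega_eval ω₂]; simp
  rw [h, omega_sum]
  have h2 : ∀ a, ω₁ (Matrix.of fun i j => ∑ b, f i j a b * ω₂ (Matrix.single a b 1)) =
      ∑ b, ω₂ (Matrix.single a b 1) * ω₁ (Matrix.of fun i j => f i j a b) := by
    intro a
    rw [omega_sum]
    refine Finset.sum_congr rfl fun b _ => ?_
    rw [show (Matrix.of fun i j => f i j a b * ω₂ (Matrix.single a b 1)) =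
      Matrix.of fun i j => ω₂ (Matrix.single a b 1) * f i j a b from by ext; simp [mul_comm]]
    rw [omega_const_mul]
  simp only [h2]
  rw [omega_eval ω₂ (Matrix.of fun a b => ω₁ (Matrix.of fun i j => f i j a b))]
  exact Finset.sum_congr rfl fun a _ => Finset.sum_congr rfl fun b _ => by
    simp [mul_comm]

/-! ### Leg calculus -/

noncomputable def oneLeg (Y : Matrix n n ℂ) : Matrix (n × n × n) (n × n × n) ℂ :=
  Matrix.of fun p q => Y p.1 q.1 * (if p.2 = q.2 then (1 : ℂ) else 0)

lemma leg12_mul (A B : Matrix (n × n) (n × n) ℂ) : leg12 (A * B) = leg12 A * leg12 B := by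
  ext ⟨i, a, c⟩ ⟨j, b, d⟩
  simp [leg12, mul_apply, Fintype.sum_prod_type, mul_ite, ite_mul, Finset.mul_sum, Finset.sum_mul]

lemma leg13_mul (A B : Matrix (n × n) (n × n) ℂ) : leg13 (A * B) = leg13 A * leg13 B := by
  ext ⟨i, a, c⟩ ⟨j, b, d⟩
  simp [leg13, mul_apply, Fintype.sum_prod_type, mul_ite, ite_mul, Finset.mul_sum, Finset.sum_mul]

lemma leg23_mul (A B : Matrix (n × n) (n × n) ℂ) : leg23 (A * B) = leg23 A * leg23 B := by
  ext ⟨i, a, c⟩ ⟨j, b, d⟩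
  simp [leg23, mul_apply, Fintype.sum_prod_type, mul_ite, ite_mul, Finset.mul_sum, Finset.sum_mul]

lemma leg12_conj (A : Matrix (n × n) (n × n) ℂ) : leg12 Aᴴ = (leg12 A)ᴴ := by
  ext ⟨i, a, c⟩ ⟨j, b, d⟩
  simp [leg12, conjTranspose_apply, apply_ite, eq_comm]
  split <;> intro h <;> simp_all

lemma leg13_conj (A : Matrix (n × n) (n × n) ℂ) : leg13 Aᴴ = (leg13 A)ᴴ := by
  ext ⟨i, a, c⟩ ⟨j, b, d⟩
  simp [leg13, conjTranspose_apply, apply_ite, eq_comm]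
  split <;> intro h <;> simp_all

lemma leg23_conj (A : Matrix (n × n) (n × n) ℂ) : leg23 Aᴴ = (leg23 A)ᴴ := by
  ext ⟨i, a, c⟩ ⟨j, b, d⟩
  simp [leg23, conjTranspose_apply, apply_ite, eq_comm]
  split <;> intro h <;> simp_all

lemma leg12_tensorOne (Y : Matrix n n ℂ) : leg12 (tensorOne Y) = oneLeg Y := by
  ext ⟨i, a, c⟩ ⟨j, b, d⟩
  simp [leg12, tensorOne, oneLeg, Prod.ext_iff, ite_and, mul_assoc]
  split_ifs <;> simp

lemma leg13_tensorOne (Y : Matrix n n ℂ) : leg13 (tensorOne Y) = oneLeg Y := by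
  ext ⟨i, a, c⟩ ⟨j, b, d⟩
  simp [leg13, tensorOne, oneLeg, Prod.ext_iff, ite_and, mul_assoc]

lemma oneLeg_comm (Y : Matrix n n ℂ) (A : Matrix (n × n) (n × n) ℂ) :
    oneLeg Y * leg23 A = leg23 A * oneLeg Y := by
  ext ⟨i, a, c⟩ ⟨j, b, d⟩
  simp [oneLeg, leg23, mul_apply, Fintype.sum_prod_type, mul_ite, ite_mul, Prod.ext_iff,
    ite_and, mul_comm]

/-- The key consequence of the MPI axioms: `V₂₃ V₁₂ V₂₃* = V₁₂ V₁₃`. -/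
lemma key_left (V : Matrix (n × n) (n × n) ℂ) (hV : IsMPI V) :
    leg23 V * leg12 V * (leg23 V)ᴴ = leg12 V * leg13 V := by
  have p12 : leg12 V * (leg12 V)ᴴ * leg12 V = leg12 V := by
    rw [← leg12_conj, ← leg12_mul, ← leg12_mul, hV.1]
  calc leg23 V * leg12 V * (leg23 V)ᴴ
      = leg12 V * leg13 V * leg23 V * (leg23 V)ᴴ := by rw [hV.2.1]
    _ = leg12 V * (leg13 V * leg23 V * (leg23 V)ᴴ) := by simp only [mul_assoc]
    _ = leg12 V * ((leg12 V)ᴴ * leg12 V * leg13 V) := by rw [hV.2.2.1]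
    _ = leg12 V * (leg12 V)ᴴ * leg12 V * leg13 V := by simp only [mul_assoc]
    _ = leg12 V * leg13 V := by rw [p12]

/-! ### Entry computations -/

lemma entry_1213 (V : Matrix (n × n) (n × n) ℂ) (i j a b c d : n) :
    (leg12 V * leg13 V) (i,a,c) (j,b,d) = ∑ k, V (i,a) (k,b) * V (k,c) (j,d) := by
  simp [leg12, leg13, mul_apply, Fintype.sum_prod_type, mul_ite, ite_mul]

lemma entry_delta (V : Matrix (n × n) (n × n) ℂ) (L : Matrix n n ℂ) (a b c d : n) :
    (V * tensorOne L * Vᴴ) (a,c) (b,d) =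
      ∑ p, ∑ e, ∑ r, V (a,c) (r,e) * L r p * (starRingEnd ℂ) (V (b,d) (p,e)) := by
  simp [tensorOne, mul_apply, Fintype.sum_prod_type, conjTranspose_apply, mul_ite, ite_mul,
    Finset.sum_mul]

lemma entry_232312 (V : Matrix (n × n) (n × n) ℂ) (i j a b c d : n) :
    (leg23 V * leg12 V * (leg23 V)ᴴ) (i,a,c) (j,b,d) =
      ∑ p, ∑ e, ∑ r, V (a,c) (r,e) * V (i,r) (j,p) * (starRingEnd ℂ) (V (b,d) (p,e)) := by
  simp [leg23, leg12, mul_apply, Fintype.sum_prod_type, conjTranspose_apply, mul_ite, ite_mul,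
    apply_ite (starRingEnd ℂ), Finset.sum_mul]

/-! ### The two main claims -/

lemma claimA (V : Matrix (n × n) (n × n) ℂ) (ω' ω'' : Matrix n n ℂ →ₗ[ℂ] ℂ) (i j : n) :
    (rho ω' V * rho ω'' V) i j =
    ω' (Matrix.of fun a b => ω'' (Matrix.of fun c d =>
      (leg12 V * leg13 V) (i,a,c) (j,b,d))) := by
  have step1 : (Matrix.of fun a b => ω'' (Matrix.of fun c d =>
      (leg12 V * leg13 V) (i,a,c) (j,b,d))) =
      Matrix.of fun a b => ∑ k,
        ω'' (Matrix.of fun c d => V (k,c) (j,d)) * V (i,a) (k,b) := by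
    ext a b
    simp only [Matrix.of_apply]
    rw [show (Matrix.of fun c d => (leg12 V * leg13 V) (i,a,c) (j,b,d)) =
        Matrix.of fun c d => ∑ k, V (i,a) (k,b) * V (k,c) (j,d) from by
      ext c d; exact entry_1213 V i j a b c d]
    rw [omega_sum ω'' Finset.univ (fun k c d => V (i,a) (k,b) * V (k,c) (j,d))]
    refine Finset.sum_congr rfl fun k _ => ?_
    rw [show Matrix.of (fun c d => V (i,a) (k,b) * V (k,c) (j,d)) =
        Matrix.of fun c d => V (i,a) (k,b) * V (k,c) (j,d) from rfl]
    rw [omega_const_mul ω'' (V (i,a) (k,b)) (fun c d => V (k,c) (j,d))]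
    ring
  rw [step1, omega_sum ω' Finset.univ
    (fun k a b => ω'' (Matrix.of fun c d => V (k,c) (j,d)) * V (i,a) (k,b))]
  have step2 : ∀ k, ω' (Matrix.of fun a b =>
      ω'' (Matrix.of fun c d => V (k,c) (j,d)) * V (i,a) (k,b)) =
      ω'' (Matrix.of fun c d => V (k,c) (j,d)) * ω' (Matrix.of fun a b => V (i,a) (k,b)) :=
    fun k => omega_const_mul ω' _ _
  simp only [step2]
  simp only [mul_apply, rho, Matrix.of_apply]
  exact Finset.sum_congr rfl fun k _ => mul_comm _ _

lemma claimB (V : Matrix (n × n) (n × n) ℂ) (hV : IsMPI V) (ω : Matrix n n ℂ →ₗ[ℂ] ℂ)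
    (a b c d : n) :
    Delta V (lam ω V) (a,c) (b,d) =
    ω (Matrix.of fun u v => (leg12 V * leg13 V) (u,a,c) (v,b,d)) := by
  rw [← key_left V hV]
  rw [show (Matrix.of fun u v => (leg23 V * leg12 V * (leg23 V)ᴴ) (u,a,c) (v,b,d)) =
      Matrix.of fun u v => ∑ p, ∑ e, ∑ r,
        (V (a,c) (r,e) * (starRingEnd ℂ) (V (b,d) (p,e))) * V (u,r) (v,p) from by
    ext u v; simp only [Matrix.of_apply]; rw [entry_232312 V u v a b c d]; exact Finset.sum_congr rfl fun p _ =>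
      Finset.sum_congr rfl fun e _ => Finset.sum_congr rfl fun r _ => by ring]
  rw [omega_sum]
  have h1 : ∀ p, ω (Matrix.of fun u v => ∑ e, ∑ r,
      (V (a,c) (r,e) * (starRingEnd ℂ) (V (b,d) (p,e))) * V (u,r) (v,p)) =
      ∑ e, ∑ r, (V (a,c) (r,e) * (starRingEnd ℂ) (V (b,d) (p,e))) *
        ω (Matrix.of fun u v => V (u,r) (v,p)) := by
    intro p
    rw [omega_sum]
    refine Finset.sum_congr rfl fun e _ => ?_
    rw [show Matrix.of (fun u v => ∑ r,
        (V (a,c) (r,e) * (starRingEnd ℂ) (V (b,d) (p,e))) * V (u,r) (v,p)) =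
        Matrix.of fun u v => ∑ r,
        (V (a,c) (r,e) * (starRingEnd ℂ) (V (b,d) (p,e))) * V (u,r) (v,p) from rfl]
    rw [omega_sum]
    exact Finset.sum_congr rfl fun r _ => omega_const_mul ω _ _
  simp only [h1]
  show (V * tensorOne (lam ω V) * Vᴴ) (a,c) (b,d) = _
  rw [entry_delta]
  refine Finset.sum_congr rfl fun p _ => Finset.sum_congr rfl fun e _ =>
    Finset.sum_congr rfl fun r _ => ?_
  have : lam ω V r p = ω (Matrix.of fun u v => V (u,r) (v,p)) := rfl
  rw [this]; ring

/-! ### Main theorem -/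

theorem statement11 (V : Matrix (n × n) (n × n) ℂ) (hV : IsMPI V)
    (ω ω' ω'' : Matrix n n ℂ →ₗ[ℂ] ℂ) :
    ω (rho ω' V * rho ω'' V) = applyBoth ω' ω'' (Delta V (lam ω V)) ∧
    leg12 V * leg13 (Delta V (lam ω V)) * (leg12 V)ᴴ =
      leg23 V * leg12 (Delta V (lam ω V)) * (leg23 V)ᴴ := by
  constructor
  · -- Part 1
    show _ = ω' (Matrix.of fun a b => ω'' (Matrix.of fun c d =>
      Delta V (lam ω V) (a,c) (b,d)))
    have hmat : (Matrix.of fun a b => ω'' (Matrix.of fun c d =>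
        Delta V (lam ω V) (a,c) (b,d))) =
        Matrix.of fun a b => ω (Matrix.of fun u v => ω'' (Matrix.of fun c d =>
          (leg12 V * leg13 V) (u,a,c) (v,b,d))) := by
      ext a b
      simp only [Matrix.of_apply]
      rw [show (Matrix.of fun c d => Delta V (lam ω V) (a,c) (b,d)) =
          Matrix.of fun c d => ω (Matrix.of fun u v =>
            (leg12 V * leg13 V) (u,a,c) (v,b,d)) from by
        ext c d; exact claimB V hV ω a b c d]
      exact omega_swap ω'' ω (fun c d u v => (leg12 V * leg13 V) (u,a,c) (v,b,d))
    rw [hmat]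
    rw [omega_swap ω' ω (fun a b u v => ω'' (Matrix.of fun c d =>
      (leg12 V * leg13 V) (u,a,c) (v,b,d)))]
    congr 1
    ext u v
    simp only [Matrix.of_apply]
    rw [claimA V ω' ω'' u v]
  · -- Part 2
    set Y := oneLeg (lam ω V) with hY
    have h13 : leg13 (Delta V (lam ω V)) = leg13 V * Y * (leg13 V)ᴴ := by
      rw [Delta, leg13_mul, leg13_mul, leg13_tensorOne, leg13_conj]
    have h12 : leg12 (Delta V (lam ω V)) = leg12 V * Y * (leg12 V)ᴴ := by
      rw [Delta, leg12_mul, leg12_mul, leg12_tensorOne, leg12_conj]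
    rw [h13, h12]
    have key := key_left V hV
    have keyd : (leg13 V)ᴴ * (leg12 V)ᴴ = leg23 V * ((leg12 V)ᴴ * (leg23 V)ᴴ) := by
      have := congrArg conjTranspose key
      simpa only [conjTranspose_mul, conjTranspose_conjTranspose, mul_assoc] using this.symm
    have k1C : ∀ C : Matrix (n × n × n) (n × n × n) ℂ,
        leg12 V * (leg13 V * C) = leg23 V * (leg12 V * ((leg23 V)ᴴ * C)) := by
      intro C
      rw [← mul_assoc, ← key]
      simp only [mul_assoc]
    have hcomm : (leg23 V)ᴴ * Y = Y * (leg23 V)ᴴ := by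
      rw [← leg23_conj]; exact (oneLeg_comm (lam ω V) Vᴴ).symm
    have commC : ∀ C : Matrix (n × n × n) (n × n × n) ℂ,
        (leg23 V)ᴴ * (Y * C) = Y * ((leg23 V)ᴴ * C) := by
      intro C; rw [← mul_assoc, hcomm, mul_assoc]
    have hex4d : ∀ C : Matrix (n × n × n) (n × n × n) ℂ,
        (leg23 V)ᴴ * (leg23 V * ((leg12 V)ᴴ * C)) =
          (leg12 V)ᴴ * ((leg23 V)ᴴ * (leg23 V * C)) := by
      intro C
      have := congrArg conjTranspose hV.2.2.2.2
      simp only [conjTranspose_mul, conjTranspose_conjTranspose] at this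
      simp only [← mul_assoc] at this
      rw [← mul_assoc, ← mul_assoc, this]
      simp only [mul_assoc]
    have piso23C : (leg23 V)ᴴ * (leg23 V * (leg23 V)ᴴ) = (leg23 V)ᴴ := by
      have p23 : leg23 V * (leg23 V)ᴴ * leg23 V = leg23 V := by
        rw [← leg23_conj, ← leg23_mul, ← leg23_mul, hV.1]
      have := congrArg conjTranspose p23
      simpa only [conjTranspose_mul, conjTranspose_conjTranspose, mul_assoc] using this
    simp only [mul_assoc]
    rw [keyd, k1C, commC, hex4d, piso23C]

end MPIpaper
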